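/- arXiv:2305.08361 — 3 statements merged into one kernel-verified Lean document; each statement's English description precedes it below -/
import Mathlib

section
/- (Lemma 2, Lipschitz continuity) The Hamiltonian H(t,z) = −μ ln(∫₀¹ e^{−α²X_t(u)/(4μ(γ+z))} p(u) du) is Lipschitz continuous in z ≥ 0 with Lipschitz constant α²K(1)/(4γ²); i.e., |H(t,z₁) − H(t,z₂)| ≤ (α²K(1)/(4γ²))|z₁ − z₂| for all z₁, z₂ ≥ 0. -/
open MeasureTheory

set_option maxHeartbeats 1000000 in
/-- (Lemma 2, Lipschitz continuity) The Hamiltonian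
`H(z) = −μ ln(∫₀¹ e^{−α²X_t(u)/(4μ(γ+z))} p(u) du)` is Lipschitz in `z ≥ 0` with
constant `α²K(1)/(4γ²)`. -/
theorem stmt_6 (α γ μ K1 : ℝ) (X p : ℝ → ℝ)
    (hα : 0 < α) (hγ : 0 < γ) (hμ : 0 < μ) (hK1 : 0 < K1)
    (hX : ∀ u ∈ Set.Icc (0:ℝ) 1, 0 < X u ∧ X u ≤ K1)
    (hXmeas : Measurable X)
    (hpmeas : Measurable p)
    (hp_nonneg : ∀ u ∈ Set.Icc (0:ℝ) 1, 0 ≤ p u)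
    (hp_int : ∫ u in (0:ℝ)..1, p u = 1) :
    ∀ z1 z2 : ℝ, 0 ≤ z1 → 0 ≤ z2 →
      |(-μ * Real.log (∫ u in (0:ℝ)..1,
            Real.exp (-(α ^ 2 * X u) / (4 * μ * (γ + z1))) * p u))
        - (-μ * Real.log (∫ u in (0:ℝ)..1,
            Real.exp (-(α ^ 2 * X u) / (4 * μ * (γ + z2))) * p u))|
        ≤ α ^ 2 * K1 / (4 * γ ^ 2) * |z1 - z2| := by
  -- p is integrable on Ioc 0 1
  have hp_intg : IntegrableOn p (Set.Ioc (0:ℝ) 1) := by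
    by_contra h
    have h' : ¬ IntervalIntegrable p volume 0 1 := by
      rw [intervalIntegrable_iff_integrableOn_Ioc_of_le zero_le_one]
      exact h
    rw [intervalIntegral.integral_undef h'] at hp_int
    exact one_ne_zero hp_int.symm
  have hpIoc : ∫ u in Set.Ioc (0:ℝ) 1, p u = 1 := by
    rw [← intervalIntegral.integral_of_le zero_le_one]
    exact hp_int
  -- integrability of the integrand for every z ≥ 0
  have hfint : ∀ z : ℝ, 0 ≤ z →
      IntegrableOn (fun u => Real.exp (-(α ^ 2 * X u) / (4 * μ * (γ + z))) * p u)
        (Set.Ioc (0:ℝ) 1) := by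
    intro z hz
    apply Integrable.mono hp_intg
    · exact ((Real.measurable_exp.comp
        ((((measurable_const.mul hXmeas).neg).div measurable_const))).mul hpmeas).aestronglyMeasurable
    · filter_upwards [ae_restrict_mem measurableSet_Ioc] with u hu
      have hu' : u ∈ Set.Icc (0:ℝ) 1 := Set.Ioc_subset_Icc_self hu
      have hXu := hX u hu'
      have hp := hp_nonneg u hu'
      have hexp : Real.exp (-(α ^ 2 * X u) / (4 * μ * (γ + z))) ≤ 1 := by
        rw [Real.exp_le_one_iff]
        apply div_nonpos_of_nonpos_of_nonneg
        · nlinarith [hXu.1, sq_nonneg α]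
        · positivity
      rw [Real.norm_eq_abs, Real.norm_eq_abs, abs_of_nonneg hp,
        abs_of_nonneg (by positivity : (0:ℝ) ≤ Real.exp (-(α ^ 2 * X u) / (4 * μ * (γ + z))) * p u)]
      nlinarith [Real.exp_pos (-(α ^ 2 * X u) / (4 * μ * (γ + z)))]
  -- positivity of the integral
  have hIpos : ∀ z : ℝ, 0 ≤ z →
      0 < ∫ u in (0:ℝ)..1, Real.exp (-(α ^ 2 * X u) / (4 * μ * (γ + z))) * p u := by
    intro z hz
    rw [intervalIntegral.integral_of_le zero_le_one]
    have hC : (0:ℝ) < Real.exp (-(α ^ 2 * K1) / (4 * μ * γ)) := Real.exp_pos _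
    have hle : ∫ u in Set.Ioc (0:ℝ) 1, Real.exp (-(α ^ 2 * K1) / (4 * μ * γ)) * p u
        ≤ ∫ u in Set.Ioc (0:ℝ) 1, Real.exp (-(α ^ 2 * X u) / (4 * μ * (γ + z))) * p u := by
      apply setIntegral_mono_on (hp_intg.const_mul _) (hfint z hz) measurableSet_Ioc
      intro u hu
      have hu' : u ∈ Set.Icc (0:ℝ) 1 := Set.Ioc_subset_Icc_self hu
      have hXu := hX u hu'
      have hp := hp_nonneg u hu'
      have hexp : Real.exp (-(α ^ 2 * K1) / (4 * μ * γ))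
          ≤ Real.exp (-(α ^ 2 * X u) / (4 * μ * (γ + z))) := by
        rw [Real.exp_le_exp, neg_div, neg_div, neg_le_neg_iff]
        gcongr
        · exact hXu.2
        · linarith
      nlinarith
    have heq : ∫ u in Set.Ioc (0:ℝ) 1, Real.exp (-(α ^ 2 * K1) / (4 * μ * γ)) * p u
        = Real.exp (-(α ^ 2 * K1) / (4 * μ * γ)) := by
      rw [integral_const_mul, hpIoc, mul_one]
    linarith [heq ▸ hle]
  -- key estimate for ordered pairs
  have key : ∀ a b : ℝ, 0 ≤ a → 0 ≤ b → a ≤ b →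
      |(-μ * Real.log (∫ u in (0:ℝ)..1,
            Real.exp (-(α ^ 2 * X u) / (4 * μ * (γ + a))) * p u))
        - (-μ * Real.log (∫ u in (0:ℝ)..1,
            Real.exp (-(α ^ 2 * X u) / (4 * μ * (γ + b))) * p u))|
        ≤ α ^ 2 * K1 / (4 * γ ^ 2) * |a - b| := by
    intro a b ha hb hab
    set Ja := ∫ u in (0:ℝ)..1, Real.exp (-(α ^ 2 * X u) / (4 * μ * (γ + a))) * p u with hJa
    set Jb := ∫ u in (0:ℝ)..1, Real.exp (-(α ^ 2 * X u) / (4 * μ * (γ + b))) * p u with hJb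
    set D : ℝ := α ^ 2 * K1 / (4 * μ * γ ^ 2) * (b - a) with hD
    have hJapos : 0 < Ja := hIpos a ha
    have hJbpos : 0 < Jb := hIpos b hb
    -- monotonicity : Ja ≤ Jb
    have hmono : Ja ≤ Jb := by
      rw [hJa, hJb, intervalIntegral.integral_of_le zero_le_one,
        intervalIntegral.integral_of_le zero_le_one]
      apply setIntegral_mono_on (hfint a ha) (hfint b hb) measurableSet_Ioc
      intro u hu
      have hu' : u ∈ Set.Icc (0:ℝ) 1 := Set.Ioc_subset_Icc_self hu
      have hXu := hX u hu'
      have hp := hp_nonneg u hu'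
      have hexp : Real.exp (-(α ^ 2 * X u) / (4 * μ * (γ + a)))
          ≤ Real.exp (-(α ^ 2 * X u) / (4 * μ * (γ + b))) := by
        rw [Real.exp_le_exp, neg_div, neg_div, neg_le_neg_iff]
        have hnum : 0 ≤ α ^ 2 * X u := mul_nonneg (sq_nonneg α) hXu.1.le
        exact div_le_div₀ hnum le_rfl (by positivity) (by nlinarith)
      nlinarith
    -- upper bound : Jb ≤ exp D * Ja
    have hupper : Jb ≤ Real.exp D * Ja := by
      rw [hJa, hJb, intervalIntegral.integral_of_le zero_le_one,
        intervalIntegral.integral_of_le zero_le_one, ← integral_const_mul]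
      apply setIntegral_mono_on (hfint b hb) (((hfint a ha).const_mul _)) measurableSet_Ioc
      intro u hu
      have hu' : u ∈ Set.Icc (0:ℝ) 1 := Set.Ioc_subset_Icc_self hu
      have hXu := hX u hu'
      have hp := hp_nonneg u hu'
      have hexp : Real.exp (-(α ^ 2 * X u) / (4 * μ * (γ + b)))
          ≤ Real.exp D * Real.exp (-(α ^ 2 * X u) / (4 * μ * (γ + a))) := by
        rw [← Real.exp_add, Real.exp_le_exp]
        have hda : (0:ℝ) < 4 * μ * (γ + a) := by positivity
        have hdb : (0:ℝ) < 4 * μ * (γ + b) := by positivity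
        have heq : α ^ 2 * X u / (4 * μ * (γ + a)) - α ^ 2 * X u / (4 * μ * (γ + b))
            = α ^ 2 * X u * (b - a) / (4 * μ * ((γ + a) * (γ + b))) := by
          field_simp
          ring
        have hineq : α ^ 2 * X u * (b - a) / (4 * μ * ((γ + a) * (γ + b)))
            ≤ α ^ 2 * K1 * (b - a) / (4 * μ * γ ^ 2) := by
          apply div_le_div₀ ?_ ?_ (by positivity) ?_
          · exact mul_nonneg (mul_nonneg (sq_nonneg α) hK1.le) (by linarith)
          · have := mul_le_mul_of_nonneg_right
              (mul_le_mul_of_nonneg_left hXu.2 (sq_nonneg α))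
              (show (0:ℝ) ≤ b - a by linarith)
            linarith
          · have h1 : γ * γ ≤ (γ + a) * (γ + b) := by nlinarith
            nlinarith [mul_le_mul_of_nonneg_left h1 hμ.le]
        have hDeq : D = α ^ 2 * K1 * (b - a) / (4 * μ * γ ^ 2) := by
          rw [hD]; ring
        rw [neg_div, neg_div]
        linarith [heq, hineq, hDeq]
      nlinarith [Real.exp_pos D, Real.exp_pos (-(α ^ 2 * X u) / (4 * μ * (γ + a)))]
    -- log bounds
    have hlog1 : Real.log Ja ≤ Real.log Jb := Real.log_le_log hJapos hmono
    have hlog2 : Real.log Jb ≤ D + Real.log Ja := by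
      have h2 : Real.log Jb ≤ Real.log (Real.exp D * Ja) := Real.log_le_log hJbpos hupper
      rwa [Real.log_mul (Real.exp_ne_zero _) hJapos.ne', Real.log_exp] at h2
    clear_value Ja Jb D
    have habs : |a - b| = b - a := by
      rw [abs_of_nonpos (by linarith)]; ring
    rw [habs, abs_of_nonneg (by nlinarith : (0:ℝ) ≤ (-μ * Real.log Ja) - (-μ * Real.log Jb))]
    have hmulD : μ * D = α ^ 2 * K1 / (4 * γ ^ 2) * (b - a) := by
      rw [hD]; field_simp
    have h3 : μ * Real.log Jb ≤ μ * (D + Real.log Ja) :=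
      mul_le_mul_of_nonneg_left hlog2 hμ.le
    have h4 : μ * (D + Real.log Ja) = μ * D + μ * Real.log Ja := mul_add μ D (Real.log Ja)
    linarith
  intro z1 z2 hz1 hz2
  rcases le_total z1 z2 with h | h
  · exact key z1 z2 hz1 hz2 h
  · rw [abs_sub_comm, abs_sub_comm z1 z2]
    exact key z2 z1 hz2 hz1 h
end

section
/- (Proposition 4, discrete non-negativity/stability) Consider the explicit finite difference scheme Φ_{i,j} = Φ_{i+1,j} − R(jΔn)jΔn (Δt/Δn)(Φ_{i+1,j} − Φ_{i+1,j−1}) + H̃(iΔt, (Φ_{i+1,j} − Φ_{i+1,j−1})/Δn)Δt with Φ_{i,0} = 0 and Φ_{I,j} = h(jΔn) ≥ 0. If 0 < Δt ≤ Δn (R(M)M + α²K(1)/(4γ²))^{−1}, then Φ_{i,j} ≥ 0 for all 0 ≤ i ≤ I, 0 ≤ j ≤ J. -/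
set_option maxHeartbeats 1000000


/-- (Proposition 4, discrete non-negativity/stability) For the explicit finite
difference scheme
`Φ_{i,j} = Φ_{i+1,j} − R(jΔn)jΔn(Δt/Δn)(Φ_{i+1,j}−Φ_{i+1,j−1}) + H̃(iΔt,(Φ_{i+1,j}−Φ_{i+1,j−1})/Δn)Δt`
with `Φ_{i,0} = 0` and `Φ_{I,j} = h(jΔn) ≥ 0`, the CFL condition
`0 < Δt ≤ Δn(R(M)M + α²K(1)/(4γ²))⁻¹` implies `Φ_{i,j} ≥ 0` for all grid points. -/
theorem stmt_12 (I J : ℕ) (Δt Δn T M α γ K1 : ℝ) (R h : ℝ → ℝ) (Htil : ℝ → ℝ → ℝ)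
    (Φ : ℕ → ℕ → ℝ)
    (hΔn : 0 < Δn) (hI : 0 < I) (hJ : 0 < J)
    (hIT : (I : ℝ) * Δt = T) (hJM : (J : ℝ) * Δn = M)
    (hα : 0 < α) (hγ : 0 < γ) (hK1 : 0 < K1)
    (hR_nonneg : ∀ x, 0 ≤ R x) (hR_mono : MonotoneOn R (Set.Icc 0 M))
    -- H̃(t,0) ≥ 0, H̃ decreasing in z, Lipschitz in z with constant α²K(1)/(4γ²)
    (hH0 : ∀ t, 0 ≤ Htil t 0)
    (hH_anti : ∀ t, Antitone (Htil t))
    (hH_lip : ∀ t z1 z2, |Htil t z1 - Htil t z2| ≤ α ^ 2 * K1 / (4 * γ ^ 2) * |z1 - z2|)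
    -- boundary and terminal data
    (h_nonneg : ∀ x, 0 ≤ h x)
    (h_term : ∀ j ≤ J, Φ I j = h ((j : ℝ) * Δn))
    (h_bc : ∀ i ≤ I, Φ i 0 = 0)
    -- scheme
    (h_scheme : ∀ i < I, ∀ j, 1 ≤ j → j ≤ J →
      Φ i j = Φ (i+1) j
        - R ((j : ℝ) * Δn) * ((j : ℝ) * Δn) * (Δt / Δn) * (Φ (i+1) j - Φ (i+1) (j-1))
        + Htil ((i : ℝ) * Δt) ((Φ (i+1) j - Φ (i+1) (j-1)) / Δn) * Δt)
    -- CFL condition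
    (hCFL0 : 0 < Δt)
    (hCFL : Δt ≤ Δn * (R M * M + α ^ 2 * K1 / (4 * γ ^ 2))⁻¹) :
    ∀ i ≤ I, ∀ j ≤ J, 0 ≤ Φ i j := by
  set L : ℝ := α ^ 2 * K1 / (4 * γ ^ 2) with hLdef
  have hL : 0 < L := by positivity
  have hRMM : 0 ≤ R M * M := by
    have hM : 0 ≤ M := by
      rw [← hJM]; positivity
    exact mul_nonneg (hR_nonneg M) hM
  have hS : 0 < R M * M + L := by linarith
  have hCFL' : (R M * M + L) * Δt ≤ Δn := by
    rw [mul_comm]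
    calc Δt * (R M * M + L) ≤ Δn * (R M * M + L)⁻¹ * (R M * M + L) :=
          mul_le_mul_of_nonneg_right hCFL (le_of_lt hS)
      _ = Δn := by field_simp
  -- backward induction
  have key : ∀ k ≤ I, ∀ j ≤ J, 0 ≤ Φ (I - k) j := by
    intro k
    induction k with
    | zero =>
      intro _ j hj
      simp only [Nat.sub_zero]
      rw [h_term j hj]
      exact h_nonneg _
    | succ k ih =>
      intro hk j hj
      have hkI : k ≤ I := Nat.le_of_succ_le hk
      have ihk := ih hkI
      have hi_lt : I - (k + 1) < I := by omega
      have hsucc : I - (k + 1) + 1 = I - k := by omega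
      rcases Nat.eq_zero_or_pos j with rfl | hj1
      · rw [h_bc _ (by omega)]
      · have hsch := h_scheme (I - (k + 1)) hi_lt j hj1 hj
        rw [hsucc] at hsch
        set a := Φ (I - k) j with ha
        set b := Φ (I - k) (j - 1) with hb
        have hA : 0 ≤ a := ihk j hj
        have hB : 0 ≤ b := ihk (j - 1) (by omega)
        set D := a - b with hD
        -- bounds on R(jΔn)jΔn
        have hjM : (j : ℝ) * Δn ≤ M := by
          rw [← hJM]
          have : (j : ℝ) ≤ (J : ℝ) := Nat.cast_le.mpr hj
          nlinarith
        have hjn0 : 0 ≤ (j : ℝ) * Δn := by positivity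
        have hRj : R ((j : ℝ) * Δn) ≤ R M := by
          apply hR_mono ⟨hjn0, hjM⟩ ⟨by rw [← hJM]; positivity, le_refl M⟩ hjM
        have hRjnn : 0 ≤ R ((j : ℝ) * Δn) := hR_nonneg _
        have hc_le : R ((j : ℝ) * Δn) * ((j : ℝ) * Δn) ≤ R M * M := by
          nlinarith
        have hc_nn : 0 ≤ R ((j : ℝ) * Δn) * ((j : ℝ) * Δn) := by positivity
        rcases le_or_gt 0 D with hDpos | hDneg
        · -- D ≥ 0 : use Lipschitz lower bound on Htil
          have hHlb : Htil ((I - (k+1) : ℕ) * Δt) (D / Δn) ≥ - (L * (D / Δn)) := by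
            have h1 := hH_lip ((I - (k+1) : ℕ) * Δt) (D / Δn) 0
            have hz : 0 ≤ D / Δn := div_nonneg hDpos (le_of_lt hΔn)
            rw [sub_zero, abs_of_nonneg hz] at h1
            have h2 : Htil ((I - (k+1) : ℕ) * Δt) 0 - Htil ((I - (k+1) : ℕ) * Δt) (D / Δn)
                ≤ L * (D / Δn) := by
              have := abs_sub_le_iff.mp h1
              linarith [this.2]
            have := hH0 ((I - (k+1) : ℕ) * Δt)
            linarith
          rw [hsch]
          have hco : R ((j : ℝ) * Δn) * ((j : ℝ) * Δn) * (Δt / Δn) + L * Δt / Δn ≤ 1 := by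
            have heq : R ((j : ℝ) * Δn) * ((j : ℝ) * Δn) * (Δt / Δn) + L * Δt / Δn
                = (R ((j : ℝ) * Δn) * ((j : ℝ) * Δn) * Δt + L * Δt) / Δn := by
              field_simp
            rw [heq, div_le_one hΔn]
            calc R ((j : ℝ) * Δn) * ((j : ℝ) * Δn) * Δt + L * Δt
                = (R ((j : ℝ) * Δn) * ((j : ℝ) * Δn) + L) * Δt := by ring
              _ ≤ (R M * M + L) * Δt :=
                  mul_le_mul_of_nonneg_right (by linarith) hCFL0.le
              _ ≤ Δn := hCFL'
          have hstep : a - R ((j : ℝ) * Δn) * ((j : ℝ) * Δn) * (Δt / Δn) * D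
              + Htil ((I - (k+1) : ℕ) * Δt) (D / Δn) * Δt
              ≥ a - (R ((j : ℝ) * Δn) * ((j : ℝ) * Δn) * (Δt / Δn) + L * Δt / Δn) * D := by
            have : Htil ((I - (k+1) : ℕ) * Δt) (D / Δn) * Δt ≥ - (L * (D / Δn)) * Δt :=
              mul_le_mul_of_nonneg_right hHlb (le_of_lt hCFL0)
            have he : - (L * (D / Δn)) * Δt = - (L * Δt / Δn) * D := by
              ring
            rw [he] at this
            linarith
          have hfin : a - (R ((j : ℝ) * Δn) * ((j : ℝ) * Δn) * (Δt / Δn) + L * Δt / Δn) * D ≥ 0 := by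
            set lam := R ((j : ℝ) * Δn) * ((j : ℝ) * Δn) * (Δt / Δn) + L * Δt / Δn with hlam
            have hlam0 : 0 ≤ lam := by positivity
            have : a - lam * D = (1 - lam) * a + lam * b := by rw [hD]; ring
            rw [this]
            have h1 : 0 ≤ (1 - lam) * a := mul_nonneg (by linarith) hA
            have h2 : 0 ≤ lam * b := mul_nonneg hlam0 hB
            linarith
          linarith
        · -- D < 0 : Htil term nonneg, transport term nonneg
          have hHnn : 0 ≤ Htil ((I - (k+1) : ℕ) * Δt) (D / Δn) := by
            have hz : D / Δn ≤ 0 := div_nonpos_of_nonpos_of_nonneg (le_of_lt hDneg) (le_of_lt hΔn)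
            exact le_trans (hH0 _) (hH_anti _ hz)
          rw [hsch]
          have h1 : 0 ≤ Htil ((I - (k+1) : ℕ) * Δt) (D / Δn) * Δt :=
            mul_nonneg hHnn (le_of_lt hCFL0)
          have h2 : R ((j : ℝ) * Δn) * ((j : ℝ) * Δn) * (Δt / Δn) * D ≤ 0 := by
            apply mul_nonpos_of_nonneg_of_nonpos
            · positivity
            · linarith
          linarith
  intro i hi j hj
  have : I - (I - i) = i := by omega
  have := key (I - i) (by omega) j hj
  rwa [show I - (I - i) = i by omega] at this
end

section
/- (Proposition 5, discrete upper bound) Under the same scheme and CFL condition as in Proposition 4, the numerical solution satisfies Φ_{i,j} ≤ h(M) + (α²T/(4γ))K(1) for all 0 ≤ i ≤ I and 0 ≤ j ≤ J. -/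
set_option maxHeartbeats 1000000


/-- (Proposition 5, discrete upper bound) Under the same explicit monotone scheme
and CFL condition as in Proposition 4, with `h` non-decreasing and
`0 ≤ H̃(t,0) ≤ α²K(1)/(4γ)`, the numerical solution satisfies
`Φ_{i,j} ≤ h(M) + (α²T/(4γ))K(1)` for all grid points. -/
theorem stmt_13 (I J : ℕ) (Δt Δn T M α γ K1 : ℝ) (R h : ℝ → ℝ) (Htil : ℝ → ℝ → ℝ)
    (Φ : ℕ → ℕ → ℝ)
    (hΔn : 0 < Δn) (hI : 0 < I) (hJ : 0 < J)
    (hIT : (I : ℝ) * Δt = T) (hJM : (J : ℝ) * Δn = M)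
    (hα : 0 < α) (hγ : 0 < γ) (hK1 : 0 < K1)
    (hR_nonneg : ∀ x, 0 ≤ R x) (hR_mono : MonotoneOn R (Set.Icc 0 M))
    (hH0 : ∀ t, 0 ≤ Htil t 0)
    (hH0ub : ∀ t, Htil t 0 ≤ α ^ 2 * K1 / (4 * γ))
    (hH_anti : ∀ t, Antitone (Htil t))
    (hH_lip : ∀ t z1 z2, |Htil t z1 - Htil t z2| ≤ α ^ 2 * K1 / (4 * γ ^ 2) * |z1 - z2|)
    (h_nonneg : ∀ x, 0 ≤ h x) (h_mono : Monotone h)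
    (h_term : ∀ j ≤ J, Φ I j = h ((j : ℝ) * Δn))
    (h_bc : ∀ i ≤ I, Φ i 0 = 0)
    (h_scheme : ∀ i < I, ∀ j, 1 ≤ j → j ≤ J →
      Φ i j = Φ (i+1) j
        - R ((j : ℝ) * Δn) * ((j : ℝ) * Δn) * (Δt / Δn) * (Φ (i+1) j - Φ (i+1) (j-1))
        + Htil ((i : ℝ) * Δt) ((Φ (i+1) j - Φ (i+1) (j-1)) / Δn) * Δt)
    (hCFL0 : 0 < Δt)
    (hCFL : Δt ≤ Δn * (R M * M + α ^ 2 * K1 / (4 * γ ^ 2))⁻¹) :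
    ∀ i ≤ I, ∀ j ≤ J, Φ i j ≤ h M + α ^ 2 * T / (4 * γ) * K1 := by
  have hMnn : 0 ≤ M := by
    rw [← hJM]; positivity
  set C : ℝ := α ^ 2 * K1 / (4 * γ) with hCdef
  set L : ℝ := α ^ 2 * K1 / (4 * γ ^ 2) with hLdef
  have hLpos : 0 < L := by rw [hLdef]; positivity
  have hCpos : 0 < C := by rw [hCdef]; positivity
  have hden : 0 < R M * M + L := by
    have := mul_nonneg (hR_nonneg M) hMnn; linarith
  have hCFL2 : Δt * (R M * M + L) ≤ Δn := by
    rw [← div_eq_mul_inv] at hCFL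
    rw [le_div_iff₀ hden] at hCFL
    exact hCFL
  have key : ∀ k ≤ I, ∀ j ≤ J, Φ (I - k) j ≤ h M + (k : ℝ) * Δt * C := by
    intro k
    induction k with
    | zero =>
      intro _ j hj
      simp only [Nat.sub_zero, Nat.cast_zero, zero_mul, add_zero]
      rw [h_term j hj]
      apply h_mono
      rw [← hJM]
      have : (j : ℝ) ≤ (J : ℝ) := by exact_mod_cast hj
      nlinarith
    | succ k ih =>
      intro hk j hj
      have hk' : k ≤ I := by omega
      set i := I - (k + 1) with hidef
      have hi1 : i + 1 = I - k := by omega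
      have hiI : i < I := by omega
      have hBk : ∀ j' ≤ J, Φ (i + 1) j' ≤ h M + (k : ℝ) * Δt * C := by
        intro j' hj'; rw [hi1]; exact ih hk' j' hj'
      rcases Nat.eq_zero_or_pos j with hj0 | hj1
      · subst hj0
        rw [h_bc i hiI.le]
        have h1 := h_nonneg M
        have : (0:ℝ) ≤ (↑(k+1) : ℝ) * Δt * C := by positivity
        linarith
      · set B : ℝ := h M + (k : ℝ) * Δt * C with hBdef
        set a : ℝ := Φ (i+1) j with hadef
        set b : ℝ := Φ (i+1) (j-1) with hbdef
        have haB : a ≤ B := hBk j hj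
        have hbB : b ≤ B := hBk (j-1) (by omega)
        set c : ℝ := R ((j : ℝ) * Δn) * ((j : ℝ) * Δn) with hcdef
        have hjM : (j : ℝ) * Δn ≤ M := by
          rw [← hJM]
          have : (j : ℝ) ≤ (J : ℝ) := by exact_mod_cast hj
          nlinarith
        have hjn : (0:ℝ) ≤ (j : ℝ) * Δn := by positivity
        have hc0 : 0 ≤ c := mul_nonneg (hR_nonneg _) hjn
        have hcM : c ≤ R M * M := by
          have hRle : R ((j : ℝ) * Δn) ≤ R M :=
            hR_mono ⟨hjn, hjM⟩ ⟨hMnn, le_refl M⟩ hjM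
          exact mul_le_mul hRle hjM hjn (hR_nonneg M)
        set d : ℝ := Δt / Δn with hddef
        have hd0 : 0 ≤ d := by positivity
        have hcd2 : (c + L) * Δt ≤ Δn := by nlinarith
        have hcd1 : (c + L) * d ≤ 1 := by
          rw [hddef, ← mul_div_assoc, div_le_one hΔn]; exact hcd2
        set t : ℝ := (i : ℝ) * Δt with htdef
        set e : ℝ := (B - a) / Δn with hedef
        have he2 : e * Δt = d * (B - a) := by
          rw [hedef, hddef]; field_simp
        have hz : (a - B) / Δn ≤ (a - b) / Δn :=
          (div_le_div_iff_of_pos_right hΔn).mpr (by linarith)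
        have hH1 : Htil t ((a - b) / Δn) ≤ Htil t ((a - B) / Δn) := hH_anti t hz
        have hH2 : Htil t ((a - B) / Δn) ≤ Htil t 0 + L * e := by
          have hlip := hH_lip t ((a - B) / Δn) 0
          have habs : |(a - B) / Δn - 0| = e := by
            rw [sub_zero, hedef, abs_div, abs_of_pos hΔn, abs_of_nonpos (by linarith : a - B ≤ 0)]
            ring
          rw [habs] at hlip
          have := abs_le.mp hlip
          linarith [this.2]
        have hF1 : Htil t ((a - b) / Δn) ≤ Htil t 0 + L * e := le_trans hH1 hH2
        have hF2 : Htil t 0 ≤ C := hH0ub t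
        have hscheme := h_scheme i hiI j hj1 hj
        rw [← htdef] at hscheme
        have hgoal : Φ i j ≤ B + Δt * C := by
          rw [hscheme]
          have P1 : Htil t ((a - b) / Δn) * Δt ≤ (Htil t 0 + L * e) * Δt :=
            mul_le_mul_of_nonneg_right hF1 hCFL0.le
          have P2 : L * (e * Δt) = L * (d * (B - a)) := by rw [he2]
          have P3 : c * d * (b - a) ≤ c * d * (B - a) := by
            apply mul_le_mul_of_nonneg_left (by linarith) (mul_nonneg hc0 hd0)
          have P4 : 0 ≤ (B - a) * (1 - (c + L) * d) :=
            mul_nonneg (by linarith) (by linarith)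
          have P5 : Htil t 0 * Δt ≤ C * Δt := mul_le_mul_of_nonneg_right hF2 hCFL0.le
          clear_value a b B c d t e L C
          rw [← hadef, ← hbdef, ← hcdef]
          linarith [P1, P2, P3, P4, P5]
        have : ((↑(k+1) : ℝ)) * Δt * C = (k : ℝ) * Δt * C + Δt * C := by
          push_cast; ring
        rw [this]
        linarith [hgoal]
  intro i hi j hj
  have hik : i = I - (I - i) := by omega
  have hki : I - i ≤ I := by omega
  have hkey := key (I - i) hki j hj
  rw [← hik] at hkey
  have hTle : ((I - i : ℕ) : ℝ) * Δt ≤ T := by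
    rw [← hIT]
    have : ((I - i : ℕ) : ℝ) ≤ (I : ℝ) := by exact_mod_cast Nat.sub_le I i
    nlinarith
  have : ((I - i : ℕ) : ℝ) * Δt * C ≤ T * C := by nlinarith
  have hfin : α ^ 2 * T / (4 * γ) * K1 = T * C := by rw [hCdef]; ring
  rw [hfin]
  linarith
end
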